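/- Let f : ℝ^p → ℝ be differentiable with L-Lipschitz gradient (‖∇f(θ) − ∇f(θ')‖ ≤ L‖θ − θ'‖ for all θ, θ'). Let θ ∈ ℝ^p, let g ∈ ℝ^p be an approximate gradient with error e = g − ∇f(θ), let η > 0, and set θ' = θ − ηg. If ‖∇f(θ)‖ ≤ G, then (η − η²L)·‖∇f(θ)‖² ≤ f(θ) − f(θ') + ηG‖e‖ + η²L‖e‖². -/

import Mathlib

open Real

section Aux
open Real intervalIntegral RealInnerProductSpace

variable {E : Type*} [NormedAddCommGroup E] [InnerProductSpace ℝ E] [CompleteSpace E]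

lemma descent_lemma (f : E → ℝ) (L : ℝ) (hL : 0 ≤ L)
    (hf : Differentiable ℝ f)
    (hLip : ∀ a b, ‖gradient f a - gradient f b‖ ≤ L * ‖a - b‖)
    (x v : E) :
    f (x + v) ≤ f x + ⟪gradient f x, v⟫ + L / 2 * ‖v‖ ^ 2 := by
  set φ' : ℝ → ℝ := fun t => ⟪gradient f (x + t • v), v⟫ with hφ'
  set ψ : ℝ → ℝ := fun t => ⟪gradient f x, v⟫ + L * t * ‖v‖ ^ 2 with hψ
  have hcont : Continuous (gradient f) := by
    have : LipschitzWith L.toNNReal (gradient f) := by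
      apply LipschitzWith.of_dist_le_mul
      intro a b
      rw [dist_eq_norm, dist_eq_norm]
      exact (hLip a b).trans (by gcongr; exact Real.le_coe_toNNReal L)
    exact this.continuous
  have hderiv : ∀ t : ℝ, HasDerivAt (fun t : ℝ => f (x + t • v)) (φ' t) t := by
    intro t
    have hc : HasDerivAt (fun t : ℝ => x + t • v) v t := by
      simpa using ((hasDerivAt_id t).smul_const v).const_add x
    have := ((hf (x + t • v)).hasGradientAt.hasFDerivAt).comp_hasDerivAt t hc
    simp [hφ', InnerProductSpace.toDual_apply_apply] at this ⊢
    exact this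
  have hcont' : Continuous φ' :=
    (hcont.comp (continuous_const.add (continuous_id.smul continuous_const))).inner
      continuous_const
  have hψcont : Continuous ψ := by
    apply continuous_const.add
    exact (continuous_const.mul continuous_id).mul continuous_const
  have hint : ∫ t in (0:ℝ)..1, φ' t = f (x + v) - f x := by
    have := intervalIntegral.integral_eq_sub_of_hasDerivAt
      (f := fun t : ℝ => f (x + t • v)) (f' := φ')
      (a := 0) (b := 1) (fun t _ => hderiv t) (hcont'.intervalIntegrable 0 1)
    simpa using this
  have hbound : ∫ t in (0:ℝ)..1, φ' t ≤ ∫ t in (0:ℝ)..1, ψ t := by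
    apply intervalIntegral.integral_mono_on (by norm_num)
      (hcont'.intervalIntegrable 0 1) (hψcont.intervalIntegrable 0 1)
    intro t ht
    have ht0 : 0 ≤ t := ht.1
    have heq : φ' t - ⟪gradient f x, v⟫ = ⟪gradient f (x + t • v) - gradient f x, v⟫ := by
      rw [inner_sub_left]
    have key : φ' t - ⟪gradient f x, v⟫ ≤ L * t * ‖v‖ ^ 2 := by
      rw [heq]
      calc ⟪gradient f (x + t • v) - gradient f x, v⟫
          ≤ ‖gradient f (x + t • v) - gradient f x‖ * ‖v‖ := real_inner_le_norm _ _
        _ ≤ (L * ‖(x + t • v) - x‖) * ‖v‖ := by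
            gcongr; exact hLip _ _
        _ = L * t * ‖v‖ ^ 2 := by
            simp [norm_smul, abs_of_nonneg ht0]; ring
    simp only [hψ]
    linarith
  have hval : ∫ t in (0:ℝ)..1, ψ t = ⟪gradient f x, v⟫ + L / 2 * ‖v‖ ^ 2 := by
    simp only [hψ]
    rw [intervalIntegral.integral_add (intervalIntegrable_const)
      (Continuous.intervalIntegrable (by fun_prop) 0 1)]
    have h1 : ∫ t in (0:ℝ)..1, L * t * ‖v‖ ^ 2 = L / 2 * ‖v‖ ^ 2 := by
      have : (fun t : ℝ => L * t * ‖v‖ ^ 2) = fun t : ℝ => (L * ‖v‖ ^ 2) * t := by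
        funext t; ring
      rw [this, intervalIntegral.integral_const_mul, integral_id]
      ring
    rw [h1]
    simp
  linarith [hint ▸ hbound, hval ▸ hbound]

end Aux

open RealInnerProductSpace

/-- One-step descent inequality for gradient descent with an inexact gradient: if `f` has
`L`-Lipschitz gradient, `‖∇f(θ)‖ ≤ G`, and `θ' = θ − ηg` with gradient error `e = g − ∇f(θ)`,
then `(η − η²L)‖∇f(θ)‖² ≤ f(θ) − f(θ') + ηG‖e‖ + η²L‖e‖²`. -/
theorem inexact_gradient_descent_step {p : ℕ}
    (f : EuclideanSpace ℝ (Fin p) → ℝ) (L : ℝ) (hL : 0 ≤ L)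
    (hf : Differentiable ℝ f)
    (hLip : ∀ a b, ‖gradient f a - gradient f b‖ ≤ L * ‖a - b‖)
    (θ g : EuclideanSpace ℝ (Fin p)) (η : ℝ) (hη : 0 < η)
    (G : ℝ) (hG : ‖gradient f θ‖ ≤ G) :
    (η - η ^ 2 * L) * ‖gradient f θ‖ ^ 2 ≤
      f θ - f (θ - η • g) + η * G * ‖g - gradient f θ‖
        + η ^ 2 * L * ‖g - gradient f θ‖ ^ 2 := by
  set d := gradient f θ with hd
  set e := g - d with he
  have hg : g = d + e := by simp [he]
  have h1 := descent_lemma f L hL hf hLip θ (-(η • g))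
  have hsub : θ - η • g = θ + -(η • g) := by abel
  have h2 : ⟪d, -(η • g)⟫ = -η * (‖d‖ ^ 2 + ⟪d, e⟫) := by
    rw [hg, inner_neg_right, inner_smul_right, inner_add_right, real_inner_self_eq_norm_sq]
    ring
  have h3 : ‖-(η • g)‖ ^ 2 = η ^ 2 * ‖g‖ ^ 2 := by
    rw [norm_neg, norm_smul]
    simp [mul_pow, sq_abs]
  have h4 : ‖g‖ ^ 2 ≤ 2 * ‖d‖ ^ 2 + 2 * ‖e‖ ^ 2 := by
    rw [hg]
    have := norm_add_sq_real d e
    nlinarith [real_inner_le_norm d e, sq_nonneg (‖d‖ - ‖e‖)]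
  have h5 : -⟪d, e⟫ ≤ G * ‖e‖ := by
    have h := abs_real_inner_le_norm d e
    have : ‖d‖ * ‖e‖ ≤ G * ‖e‖ := by
      gcongr
    cases abs_le.mp h with
    | intro hl hr => linarith
  have hLg : L / 2 * ‖-(η • g)‖ ^ 2 ≤ η ^ 2 * L * ‖d‖ ^ 2 + η ^ 2 * L * ‖e‖ ^ 2 := by
    rw [h3]
    nlinarith [mul_nonneg hL (sq_nonneg η)]
  have h5' : η * (-⟪d, e⟫) ≤ η * (G * ‖e‖) := mul_le_mul_of_nonneg_left h5 hη.le
  rw [hsub] at *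
  nlinarith [h1, h2, hLg, h5']
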